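/- For an odd prime p, the weighted count of isomorphism classes of elliptic curves over 𝔽_p with full rational 2-torsion satisfies S*_{2×2,0}(p) = Σ_{E/𝔽_p, E(𝔽_p)[2] ≅ (ℤ/2ℤ)²} 1/|Aut(E)| = p/6 − 1/3. -/

import Mathlib

/-- The Weierstrass curve with coefficient tuple `(a₁, a₂, a₃, a₄, a₆)`. -/
def wcOf {R : Type*} [CommRing R] (v : R × R × R × R × R) : WeierstrassCurve R :=
  ⟨v.1, v.2.1, v.2.2.1, v.2.2.2.1, v.2.2.2.2⟩

/-- The number of rational 2-torsion points of a Weierstrass curve over a field of odd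
characteristic: the point at infinity together with the affine points `(x, y)` on the curve
with `2y + a₁x + a₃ = 0`. -/
noncomputable def wcTwoTorsionCount {R : Type*} [CommRing R] (W : WeierstrassCurve R) : ℕ :=
  1 + Nat.card {P : R × R //
    W.toAffine.Equation P.1 P.2 ∧ 2 * P.2 + W.a₁ * P.1 + W.a₃ = 0}

section Aux

variable {K : Type*} [Field K]

theorem quad3 {a b c r s t : K} (hrs : r ≠ s) (hst : s ≠ t) (hrt : r ≠ t)
    (hr : a * r ^ 2 + b * r + c = 0) (hs : a * s ^ 2 + b * s + c = 0)
    (ht : a * t ^ 2 + b * t + c = 0) : a = 0 ∧ b = 0 ∧ c = 0 := by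
  have h1 : (r - s) * (a * (r + s) + b) = 0 := by linear_combination hr - hs
  have h2 : (s - t) * (a * (s + t) + b) = 0 := by linear_combination hs - ht
  have h1' : a * (r + s) + b = 0 :=
    (mul_eq_zero.mp h1).resolve_left (fun h => hrs (sub_eq_zero.mp h))
  have h2' : a * (s + t) + b = 0 :=
    (mul_eq_zero.mp h2).resolve_left (fun h => hst (sub_eq_zero.mp h))
  have ha : a * (r - t) = 0 := by linear_combination h1' - h2'
  have ha' : a = 0 :=
    (mul_eq_zero.mp ha).resolve_right (fun h => hrt (sub_eq_zero.mp h))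
  subst ha'
  have hb : b = 0 := by linear_combination h1'
  subst hb
  exact ⟨rfl, rfl, by linear_combination hr⟩

theorem vieta_of_roots {c₂ c₁ c₀ r s t : K} (hrs : r ≠ s) (hst : s ≠ t) (hrt : r ≠ t)
    (hr : r ^ 3 + c₂ * r ^ 2 + c₁ * r + c₀ = 0)
    (hs : s ^ 3 + c₂ * s ^ 2 + c₁ * s + c₀ = 0)
    (ht : t ^ 3 + c₂ * t ^ 2 + c₁ * t + c₀ = 0) :
    c₂ = -(r + s + t) ∧ c₁ = r * s + r * t + s * t ∧ c₀ = -(r * s * t) := by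
  obtain ⟨h1, h2, h3⟩ := quad3 (a := c₂ + (r + s + t)) (b := c₁ - (r * s + r * t + s * t))
      (c := c₀ + r * s * t) hrs hst hrt
      (by linear_combination hr) (by linear_combination hs) (by linear_combination ht)
  exact ⟨by linear_combination h1, by linear_combination h2, by linear_combination h3⟩

theorem cubic_root_iff {c₂ c₁ c₀ r s t x : K}
    (h2 : c₂ = -(r + s + t)) (h1 : c₁ = r * s + r * t + s * t) (h0 : c₀ = -(r * s * t)) :
    x ^ 3 + c₂ * x ^ 2 + c₁ * x + c₀ = 0 ↔ x = r ∨ x = s ∨ x = t := by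
  have key : x ^ 3 + c₂ * x ^ 2 + c₁ * x + c₀ = (x - r) * ((x - s) * (x - t)) := by
    subst h2 h1 h0; ring
  rw [key, mul_eq_zero, mul_eq_zero, sub_eq_zero, sub_eq_zero, sub_eq_zero]

theorem four_ne (h2 : (2:K) ≠ 0) : (4:K) ≠ 0 := by
  intro h; apply h2
  have h4 : (2:K)*2 = 0 := by norm_num at h ⊢; linear_combination h
  rcases mul_eq_zero.mp h4 with h|h <;> exact h

theorem twoTorsion_equiv (h2 : (2:K) ≠ 0) (a₁ a₂ a₃ a₄ a₆ : K) :
    Nat.card {P : K × K // (wcOf (a₁,a₂,a₃,a₄,a₆)).toAffine.Equation P.1 P.2 ∧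
        2 * P.2 + (wcOf (a₁,a₂,a₃,a₄,a₆)).a₁ * P.1 + (wcOf (a₁,a₂,a₃,a₄,a₆)).a₃ = 0} =
    Nat.card {x : K //
      x ^ 3 + (a₂ + a₁^2/4) * x ^ 2 + (a₄ + a₁*a₃/2) * x + (a₆ + a₃^2/4) = 0} := by
  apply Nat.card_congr
  have e4 : (4:K) ≠ 0 := four_ne h2
  refine ⟨fun P => ⟨P.1.1, ?_⟩, fun x => ⟨(x.1, -(a₁ * x.1 + a₃)/2), ?_, ?_⟩, ?_, ?_⟩
  · obtain ⟨⟨x, y⟩, heq, hlin⟩ := P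
    rw [WeierstrassCurve.Affine.equation_iff] at heq
    simp only [wcOf] at heq hlin ⊢
    field_simp
    linear_combination (-8:K) * heq + 2*(2*y + a₁*x + a₃) * hlin
  · obtain ⟨x, hx⟩ := x
    rw [WeierstrassCurve.Affine.equation_iff]
    simp only [wcOf] at hx ⊢
    field_simp at hx ⊢
    apply mul_left_cancel₀ h2
    linear_combination -hx
  · simp only [wcOf]
    field_simp
    ring
  · rintro ⟨⟨x, y⟩, heq, hlin⟩
    simp only [wcOf] at hlin
    ext
    · rfl
    · simp only
      field_simp
      linear_combination -hlin
  · rintro ⟨x, hx⟩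
    rfl

theorem delta_eq (h2 : (2:K) ≠ 0) {a₁ a₂ a₃ a₄ a₆ r s t : K}
    (hc2 : a₂ + a₁^2/4 = -(r+s+t)) (hc4 : a₄ + a₁*a₃/2 = r*s+r*t+s*t)
    (hc6 : a₆ + a₃^2/4 = -(r*s*t)) :
    (wcOf (a₁,a₂,a₃,a₄,a₆)).Δ = 16 * ((r-s)*(s-t)*(r-t))^2 := by
  have e4 : (4:K) ≠ 0 := four_ne h2
  have hc2 : 4*a₂ + a₁^2 = -4*(r+s+t) := by field_simp at hc2; linear_combination hc2
  have hc4 : 2*a₄ + a₁*a₃ = 2*(r*s+r*t+s*t) := by field_simp at hc4; linear_combination hc4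
  have hc6 : 4*a₆ + a₃^2 = -4*(r*s*t) := by field_simp at hc6; linear_combination hc6
  have hb2 : (wcOf (a₁,a₂,a₃,a₄,a₆)).b₂ = -4*(r+s+t) := by
    simp only [WeierstrassCurve.b₂, wcOf]
    linear_combination hc2
  have hb4 : (wcOf (a₁,a₂,a₃,a₄,a₆)).b₄ = 2*(r*s+r*t+s*t) := by
    simp only [WeierstrassCurve.b₄, wcOf]
    linear_combination hc4
  have hb6 : (wcOf (a₁,a₂,a₃,a₄,a₆)).b₆ = -4*(r*s*t) := by
    simp only [WeierstrassCurve.b₆, wcOf]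
    linear_combination hc6
  have hb8 : (wcOf (a₁,a₂,a₃,a₄,a₆)).b₈ = 4*(r+s+t)*(r*s*t) - (r*s+r*t+s*t)^2 := by
    apply mul_left_cancel₀ e4
    simp only [WeierstrassCurve.b₈, wcOf]
    linear_combination (a₃^2 + 4*a₆)*hc2 + (-4*(r+s+t))*hc6
      - (2*a₄ + a₁*a₃ + 2*(r*s+r*t+s*t))*hc4
  rw [WeierstrassCurve.Δ, hb2, hb4, hb6, hb8]
  ring

theorem mem_S_iff [Fintype K] [DecidableEq K] (h2 : (2:K) ≠ 0) (v : K × K × K × K × K) :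
    ((wcOf v).Δ ≠ 0 ∧ wcTwoTorsionCount (wcOf v) = 4) ↔
    ∃ r s t : K, r ≠ s ∧ s ≠ t ∧ r ≠ t ∧
      v.2.1 + v.1^2/4 = -(r+s+t) ∧
      v.2.2.2.1 + v.1*v.2.2.1/2 = r*s+r*t+s*t ∧
      v.2.2.2.2 + v.2.2.1^2/4 = -(r*s*t) := by
  obtain ⟨a₁, a₂, a₃, a₄, a₆⟩ := v
  have hcard : wcTwoTorsionCount (wcOf (a₁,a₂,a₃,a₄,a₆)) =
      1 + (Finset.univ.filter (fun x : K =>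
        x ^ 3 + (a₂ + a₁^2/4) * x ^ 2 + (a₄ + a₁*a₃/2) * x + (a₆ + a₃^2/4) = 0)).card := by
    rw [wcTwoTorsionCount, twoTorsion_equiv h2, Nat.card_eq_fintype_card, Fintype.card_subtype]
  constructor
  · rintro ⟨-, h4⟩
    rw [hcard] at h4
    have h3 : (Finset.univ.filter (fun x : K =>
        x ^ 3 + (a₂ + a₁^2/4) * x ^ 2 + (a₄ + a₁*a₃/2) * x + (a₆ + a₃^2/4) = 0)).card = 3 := by
      omega
    obtain ⟨r, s, t, hrs, hrt, hst, hset⟩ := Finset.card_eq_three.mp h3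
    have hmem : ∀ x : K, x ∈ ({r, s, t} : Finset K) →
        x ^ 3 + (a₂ + a₁^2/4) * x ^ 2 + (a₄ + a₁*a₃/2) * x + (a₆ + a₃^2/4) = 0 := by
      intro x hx
      rw [← hset] at hx
      exact (Finset.mem_filter.mp hx).2
    obtain ⟨e2, e1, e0⟩ := vieta_of_roots hrs hst hrt
      (hmem r (by simp)) (hmem s (by simp)) (hmem t (by simp))
    exact ⟨r, s, t, hrs, hst, hrt, e2, e1, e0⟩
  · rintro ⟨r, s, t, hrs, hst, hrt, e2, e1, e0⟩
    constructor
    · rw [delta_eq h2 e2 e1 e0]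
      have h16 : (16:K) ≠ 0 := by
        intro h; apply four_ne h2
        have : (4:K)*4 = 0 := by norm_num at h ⊢; linear_combination h
        rcases mul_eq_zero.mp this with h|h <;> exact h
      exact mul_ne_zero h16 (pow_ne_zero _ (mul_ne_zero (mul_ne_zero
        (sub_ne_zero.mpr hrs) (sub_ne_zero.mpr hst)) (sub_ne_zero.mpr hrt)))
    · rw [hcard]
      have hset : (Finset.univ.filter (fun x : K =>
          x ^ 3 + (a₂ + a₁^2/4) * x ^ 2 + (a₄ + a₁*a₃/2) * x + (a₆ + a₃^2/4) = 0)) =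
          {r, s, t} := by
        ext x
        simp [cubic_root_iff e2 e1 e0]
      rw [hset, Finset.card_insert_of_notMem (by simp [hrs, hrt]),
        Finset.card_insert_of_notMem (by simp [hst]), Finset.card_singleton]

end Aux

def tripleEquiv {α : Type*} :
    {w : α × α × α // w.1 ≠ w.2.1 ∧ w.2.1 ≠ w.2.2 ∧ w.1 ≠ w.2.2} ≃ (Fin 3 ↪ α) where
  toFun w := ⟨![w.1.1, w.1.2.1, w.1.2.2], by
    obtain ⟨⟨a, b, c⟩, h1, h2, h3⟩ := w
    intro i j h
    fin_cases i <;> fin_cases j <;> simp_all <;> simp_all [eq_comm]⟩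
  invFun f := ⟨(f 0, f 1, f 2), by
    refine ⟨fun h => absurd (f.injective h) (by decide),
      fun h => absurd (f.injective h) (by decide),
      fun h => absurd (f.injective h) (by decide)⟩⟩
  left_inv w := rfl
  right_inv f := by
    ext i
    fin_cases i <;> rfl

set_option maxHeartbeats 2000000 in
open scoped Classical in
/-- For an odd prime `p`, the weighted number of isomorphism classes of elliptic curves over
`𝔽_p` with full rational 2-torsion `E(𝔽_p)[2] ≅ (ℤ/2ℤ)²` is
`S*_{2×2,0}(p) = Σ 1/|Aut E| = p/6 - 1/3`; the weighted count is computed by counting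
nonsingular Weierstrass equations, each isomorphism class accounting for `(p-1)p³/|Aut E|`
of them. -/
theorem weighted_count_full_two_torsion (p : ℕ) [Fact p.Prime] (hp : p ≠ 2) :
    (((p : ℚ) - 1) * p ^ 3)⁻¹ *
      ((Finset.univ.filter (fun v : ZMod p × ZMod p × ZMod p × ZMod p × ZMod p =>
        (wcOf v).Δ ≠ 0 ∧ wcTwoTorsionCount (wcOf v) = 4)).card : ℚ) =
    (p : ℚ) / 6 - 1 / 3 := by
  have hprime : p.Prime := Fact.out
  have hp3 : 3 ≤ p := by
    have h2le := hprime.two_le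
    omega
  have h2 : (2 : ZMod p) ≠ 0 := by
    intro h
    rw [show (2 : ZMod p) = ((2:ℕ) : ZMod p) by norm_num,
      ZMod.natCast_eq_zero_iff] at h
    have := Nat.le_of_dvd (by norm_num) h
    omega
  set S := (Finset.univ.filter (fun v : ZMod p × ZMod p × ZMod p × ZMod p × ZMod p =>
    (wcOf v).Δ ≠ 0 ∧ wcTwoTorsionCount (wcOf v) = 4)) with hS
  set T := Finset.univ.filter
    (fun w : ZMod p × ZMod p × ZMod p => w.1 ≠ w.2.1 ∧ w.2.1 ≠ w.2.2 ∧ w.1 ≠ w.2.2) with hT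
  set D := (Finset.univ : Finset (ZMod p × ZMod p)) ×ˢ T with hD
  set Ψ : (ZMod p × ZMod p) × (ZMod p × ZMod p × ZMod p) →
      ZMod p × ZMod p × ZMod p × ZMod p × ZMod p :=
    fun d => (d.1.1,
      -(d.2.1 + d.2.2.1 + d.2.2.2) - d.1.1^2/4,
      d.1.2,
      (d.2.1*d.2.2.1 + d.2.1*d.2.2.2 + d.2.2.1*d.2.2.2) - d.1.1*d.1.2/2,
      -(d.2.1*d.2.2.1*d.2.2.2) - d.1.2^2/4) with hΨ
  have hmap : ∀ d ∈ D, Ψ d ∈ S := by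
    rintro ⟨⟨b₁, b₃⟩, ⟨r, s, t⟩⟩ hd
    rw [hD, Finset.mem_product, hT, Finset.mem_filter] at hd
    obtain ⟨-, -, hrs, hst, hrt⟩ := hd
    rw [hS, Finset.mem_filter]
    exact ⟨Finset.mem_univ _, (mem_S_iff h2 _).mpr
      ⟨r, s, t, hrs, hst, hrt, by simp only [hΨ]; ring, by simp only [hΨ]; ring,
        by simp only [hΨ]; ring⟩⟩
  have hfiber : ∀ v ∈ S, (D.filter (fun d => Ψ d = v)).card = 6 := by
    rintro ⟨v₁, v₂, v₃, v₄, v₆⟩ hv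
    rw [hS, Finset.mem_filter] at hv
    obtain ⟨r, s, t, hrs, hst, hrt, e2, e1, e0⟩ := (mem_S_iff h2 _).mp hv.2
    simp only at e2 e1 e0
    have hE : D.filter (fun d => Ψ d = (v₁,v₂,v₃,v₄,v₆)) =
        {((v₁,v₃),(r,s,t)), ((v₁,v₃),(r,t,s)), ((v₁,v₃),(s,r,t)),
         ((v₁,v₃),(s,t,r)), ((v₁,v₃),(t,r,s)), ((v₁,v₃),(t,s,r))} := by
      ext ⟨⟨b₁,b₃⟩,⟨u₁,u₂,u₃⟩⟩
      simp only [Finset.mem_filter, hD, Finset.mem_product, hT, Finset.mem_univ, true_and,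
        Finset.mem_insert, Finset.mem_singleton, hΨ, Prod.mk.injEq]
      constructor
      · rintro ⟨⟨hu12, hu23, hu13⟩, hb1, hA2, hb3, hA4, hA6⟩
        subst hb1 hb3
        have g2 : u₁+u₂+u₃ = r+s+t := by
          have h4 := four_ne h2
          field_simp at hA2 e2
          apply mul_left_cancel₀ h4
          linear_combination -hA2 - e2
        have g1 : u₁*u₂ + u₁*u₃ + u₂*u₃ = r*s+r*t+s*t := by
          field_simp at hA4 e1
          apply mul_left_cancel₀ h2
          linear_combination hA4 + e1
        have g0 : u₁*u₂*u₃ = r*s*t := by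
          have h4 := four_ne h2
          field_simp at hA6 e0
          apply mul_left_cancel₀ h4
          linear_combination -hA6 - e0
        have hroot : ∀ x : ZMod p, (x = u₁ ∨ x = u₂ ∨ x = u₃) → (x = r ∨ x = s ∨ x = t) := by
          intro x hx
          have hux : x ^ 3 + (-(u₁+u₂+u₃)) * x ^ 2 + (u₁*u₂+u₁*u₃+u₂*u₃) * x
              + (-(u₁*u₂*u₃)) = 0 := (cubic_root_iff rfl rfl rfl).mpr hx
          have hrx : x ^ 3 + (-(r+s+t)) * x ^ 2 + (r*s+r*t+s*t) * x + (-(r*s*t)) = 0 := by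
            linear_combination hux + x^2 * g2 - x * g1 + g0
          exact (cubic_root_iff rfl rfl rfl).mp hrx
        have m1 := hroot u₁ (Or.inl rfl)
        have m2 := hroot u₂ (Or.inr (Or.inl rfl))
        have m3 := hroot u₃ (Or.inr (Or.inr rfl))
        clear hv hmap hA2 hA4 hA6 g2 g1 g0 hroot
        rcases m1 with rfl|rfl|rfl <;> rcases m2 with rfl|rfl|rfl <;>
          rcases m3 with rfl|rfl|rfl <;>
          first
            | exact absurd rfl hu12
            | exact absurd rfl hu23
            | exact absurd rfl hu13
            | simp
      · rintro (⟨⟨rfl,rfl⟩,rfl,rfl,rfl⟩|⟨⟨rfl,rfl⟩,rfl,rfl,rfl⟩|⟨⟨rfl,rfl⟩,rfl,rfl,rfl⟩|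
          ⟨⟨rfl,rfl⟩,rfl,rfl,rfl⟩|⟨⟨rfl,rfl⟩,rfl,rfl,rfl⟩|⟨⟨rfl,rfl⟩,rfl,rfl,rfl⟩)
        · exact ⟨⟨hrs, hst, hrt⟩, rfl, by linear_combination -e2, rfl,
            by linear_combination -e1, by linear_combination -e0⟩
        · exact ⟨⟨hrt, hst.symm, hrs⟩, rfl, by linear_combination -e2, rfl,
            by linear_combination -e1, by linear_combination -e0⟩
        · exact ⟨⟨hrs.symm, hrt, hst⟩, rfl, by linear_combination -e2, rfl,
            by linear_combination -e1, by linear_combination -e0⟩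
        · exact ⟨⟨hst, hrt.symm, hrs.symm⟩, rfl, by linear_combination -e2, rfl,
            by linear_combination -e1, by linear_combination -e0⟩
        · exact ⟨⟨hrt.symm, hrs, hst.symm⟩, rfl, by linear_combination -e2, rfl,
            by linear_combination -e1, by linear_combination -e0⟩
        · exact ⟨⟨hst.symm, hrs.symm, hrt.symm⟩, rfl, by linear_combination -e2, rfl,
            by linear_combination -e1, by linear_combination -e0⟩
    rw [hE]
    rw [Finset.card_insert_of_notMem (by simp [Prod.ext_iff]; tauto),
      Finset.card_insert_of_notMem (by simp [Prod.ext_iff]; tauto),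
      Finset.card_insert_of_notMem (by simp [Prod.ext_iff]; tauto),
      Finset.card_insert_of_notMem (by simp [Prod.ext_iff]; tauto),
      Finset.card_insert_of_notMem (by simp [Prod.ext_iff]; tauto),
      Finset.card_singleton]
  have hDcard : D.card = p.descFactorial 3 * p ^ 2 := by
    rw [hD, Finset.card_product, hT, ← Fintype.card_subtype,
      Fintype.card_congr tripleEquiv, Fintype.card_embedding_eq, Finset.card_univ,
      Fintype.card_prod, ZMod.card, Fintype.card_fin]
    ring
  have hcount : D.card = 6 * S.card := by
    rw [Finset.card_eq_sum_card_fiberwise hmap, Finset.sum_congr rfl hfiber,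
      Finset.sum_const, smul_eq_mul, mul_comm]
  have hdf : p.descFactorial 3 = (p-2) * ((p-1) * p) := by
    rw [Nat.descFactorial_succ, Nat.descFactorial_succ, Nat.descFactorial_succ,
      Nat.descFactorial_zero, Nat.sub_zero, Nat.mul_one]
  have hkey : (6:ℚ) * S.card = (((p:ℚ)-2) * (((p:ℚ)-1) * p)) * (p:ℚ)^2 := by
    have h := hcount.symm.trans (hDcard.trans (by rw [hdf]))
    have hc := congrArg (Nat.cast : ℕ → ℚ) h
    push_cast [Nat.cast_sub (show 2 ≤ p by omega), Nat.cast_sub (show 1 ≤ p by omega)] at hc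
    linarith [hc]
  have hp0 : (p:ℚ) ≠ 0 := by
    have : (3:ℚ) ≤ p := by exact_mod_cast hp3
    linarith
  have hp1 : (p:ℚ) - 1 ≠ 0 := by
    have : (3:ℚ) ≤ p := by exact_mod_cast hp3
    intro h; linarith
  field_simp
  linear_combination (3:ℚ) * hkey
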